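/- Let a, b ∈ F_2[x], let A := Circ(a), B := Circ(b), and let H_X := [A B] and H_Z := [B^T A^T] be n×2n matrices over F_2. Then there exist an n×n permutation matrix P and a 2n×2n permutation matrix Q such that H_Z = P·H_X·Q and H_X = P·H_Z·Q (concretely, one can take P the index-reversal permutation P_{ij} = 1 iff i + j ≡ 0 (mod n), and Q the permutation that swaps the two length-n blocks and applies the index reversal within each block). Consequently d_X = d_Z, where d_Z := min{wt(w) : w ∈ F_2^{2n}, H_Z w = 0, w ∉ rs(H_X)} and d_X := min{wt(w) : w ∈ F_2^{2n}, H_X w = 0, w ∉ rs(H_Z)}. -/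

import Mathlib

open Polynomial Matrix

noncomputable section

/-- `R_n = F_2[x]/(x^n - 1)`. -/
abbrev Rq (n : ℕ) : Type :=
  Polynomial (ZMod 2) ⧸ Ideal.span ({X ^ n - 1} : Set (Polynomial (ZMod 2)))

/-- The canonical projection `F_2[x] → R_n`. -/
abbrev mkq (n : ℕ) : Polynomial (ZMod 2) →+* Rq n :=
  Ideal.Quotient.mk (Ideal.span ({X ^ n - 1} : Set (Polynomial (ZMod 2))))

/-- The unique polynomial representative of degree `< n` of an element of `R_n`
(obtained by reducing any lift modulo the monic polynomial `x^n - 1`). -/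
def rep (n : ℕ) (z : Rq n) : Polynomial (ZMod 2) :=
  Function.surjInv Ideal.Quotient.mk_surjective z %ₘ (X ^ n - 1)

/-- Hamming weight of an element of `R_n`: the number of nonzero coefficients of its
unique representative of degree `< n`. -/
def wtq (n : ℕ) (z : Rq n) : ℕ := (rep n z).support.card

/-- The `n × n` circulant matrix of `a ∈ F_2[x]`: entry `(i,j)` is the coefficient of
`x^((j-i) mod n)` in the reduction of `a` modulo `x^n - 1`. -/
def Circ (n : ℕ) (a : Polynomial (ZMod 2)) : Matrix (Fin n) (Fin n) (ZMod 2) :=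
  Matrix.of fun i j => (a %ₘ (X ^ n - 1)).coeff ((j - i : Fin n) : ℕ)

lemma hammingNorm_comp_equiv {ι κ : Type*} [Fintype ι] [Fintype κ] {α : Type*} [Zero α]
    [DecidableEq α] (w : ι → α) (f : κ ≃ ι) : hammingNorm (w ∘ f) = hammingNorm w := by
  simp only [hammingNorm]
  exact Finset.card_equiv f (by simp)

/-- `H_Z` and `H_X` of a GB code are permutation-equivalent
(`H_Z = P H_X Q` and `H_X = P H_Z Q` for permutation matrices `P`, `Q`), and
consequently `d_X = d_Z`. -/
theorem stmt18 (n : ℕ) (hn : 1 ≤ n) (a b : Polynomial (ZMod 2))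
    (HX HZ : Matrix (Fin n) (Fin n ⊕ Fin n) (ZMod 2))
    (hHX : HX = Matrix.fromCols (Circ n a) (Circ n b))
    (hHZ : HZ = Matrix.fromCols (Circ n b)ᵀ (Circ n a)ᵀ)
    (dZ dX : ℕ)
    (hdZ : dZ = sInf {m : ℕ | ∃ w : Fin n ⊕ Fin n → ZMod 2,
      HZ.mulVec w = 0 ∧ w ∉ LinearMap.range HX.vecMulLinear ∧ m = hammingNorm w})
    (hdX : dX = sInf {m : ℕ | ∃ w : Fin n ⊕ Fin n → ZMod 2,
      HX.mulVec w = 0 ∧ w ∉ LinearMap.range HZ.vecMulLinear ∧ m = hammingNorm w}) :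
    (∃ (σ : Equiv.Perm (Fin n)) (τ : Equiv.Perm (Fin n ⊕ Fin n)),
      HZ = σ.permMatrix (ZMod 2) * HX * τ.permMatrix (ZMod 2) ∧
      HX = σ.permMatrix (ZMod 2) * HZ * τ.permMatrix (ZMod 2)) ∧
    dX = dZ := by
  have : NeZero n := ⟨by omega⟩
  set e : Equiv.Perm (Fin n) := Equiv.neg (Fin n) with he
  set f : Fin n ⊕ Fin n ≃ Fin n ⊕ Fin n :=
    (Equiv.sumCongr (Equiv.neg (Fin n)) (Equiv.neg (Fin n))).trans (Equiv.sumComm _ _) with hf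
  have keyZ : HZ = HX.submatrix e f := by
    subst hHX hHZ
    ext i j
    cases j with
    | inl j =>
        show (Circ n b)ᵀ i j = Circ n b (e i) (-j)
        simp only [Circ, transpose_apply, of_apply, he, Equiv.neg_apply]
        congr 2
        abel
    | inr j =>
        show (Circ n a)ᵀ i j = Circ n a (e i) (-j)
        simp only [Circ, transpose_apply, of_apply, he, Equiv.neg_apply]
        congr 2
        abel
  have keyX : HX = HZ.submatrix e f := by
    rw [keyZ, Matrix.submatrix_submatrix]
    have h1 : (e : Fin n → Fin n) ∘ e = id := by
      funext x; simp [he]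
    have h2 : (f : _ → _) ∘ f = id := by
      funext x; cases x <;> simp [hf]
    rw [h1, h2, Matrix.submatrix_id_id]
  constructor
  · refine ⟨e, f.symm, ?_, ?_⟩
    · rw [Equiv.Perm.permMatrix, Equiv.Perm.permMatrix, PEquiv.toMatrix_toPEquiv_mul,
        PEquiv.mul_toMatrix_toPEquiv, Equiv.symm_symm, Matrix.submatrix_submatrix, keyZ]
      rfl
    · rw [Equiv.Perm.permMatrix, Equiv.Perm.permMatrix, PEquiv.toMatrix_toPEquiv_mul,
        PEquiv.mul_toMatrix_toPEquiv, Equiv.symm_symm, Matrix.submatrix_submatrix, keyX]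
      rfl
  · have main : ∀ (M N : Matrix (Fin n) (Fin n ⊕ Fin n) (ZMod 2)),
        N = M.submatrix e f → M = N.submatrix e f →
        {m : ℕ | ∃ w : Fin n ⊕ Fin n → ZMod 2,
          N.mulVec w = 0 ∧ w ∉ LinearMap.range M.vecMulLinear ∧ m = hammingNorm w} ⊆
        {m : ℕ | ∃ w : Fin n ⊕ Fin n → ZMod 2,
          M.mulVec w = 0 ∧ w ∉ LinearMap.range N.vecMulLinear ∧ m = hammingNorm w} := by
      rintro M N hN hM m ⟨w, hw0, hwr, hwn⟩
      refine ⟨w ∘ f, ?_, ?_, ?_⟩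
      · rw [hM, Matrix.submatrix_mulVec_equiv]
        have : (w ∘ f) ∘ (f.symm : _ → _) = w := by
          funext x; simp
        rw [this, hw0]
        funext i; rfl
      · rintro ⟨v, hv⟩
        apply hwr
        refine ⟨v ∘ e.symm, ?_⟩
        rw [Matrix.vecMulLinear_apply] at hv ⊢
        rw [hN, Matrix.submatrix_vecMul_equiv] at hv
        funext i
        have := congrFun hv (f.symm i)
        simpa using this
      · rw [hwn, hammingNorm_comp_equiv]
    have hset : {m : ℕ | ∃ w : Fin n ⊕ Fin n → ZMod 2,
          HZ.mulVec w = 0 ∧ w ∉ LinearMap.range HX.vecMulLinear ∧ m = hammingNorm w} =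
        {m : ℕ | ∃ w : Fin n ⊕ Fin n → ZMod 2,
          HX.mulVec w = 0 ∧ w ∉ LinearMap.range HZ.vecMulLinear ∧ m = hammingNorm w} :=
      le_antisymm (main HX HZ keyZ keyX) (main HZ HX keyX keyZ)
    rw [hdX, hdZ, hset]

end
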